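/- Under the same setup (X bounded a.s., ε independent of X with E[ε²] < ∞, C independent of (ε, X), T = exp(X^⊤β⁰ + ε), δ = 1_{T≤C}, Y = min(T,C), G_0(t) = P(C > t) continuous with G_0(T) ≥ ζ_0 > 0 a.s.), the second moment of the weighted score satisfies, entrywise, E[ (δ / G_0(Y)²) · g_τ(ε)² · X X^⊤ ] = E[ g_τ(ε)² · X X^⊤ / G_0(T) ]. -/

import Mathlib

open MeasureTheory ProbabilityTheory Filter Topology

noncomputable section

/-- `g_τ(x) = -2τx 1_{x≥0} - 2(1-τ)x 1_{x<0}`. -/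
def gExp (τ x : ℝ) : ℝ := if 0 ≤ x then -2 * τ * x else -2 * (1 - τ) * x

lemma gExp_measurable (τ : ℝ) : Measurable (gExp τ) := by
  unfold gExp
  exact Measurable.ite (measurableSet_le measurable_const measurable_id)
    (by fun_prop) (by fun_prop)

lemma gExp_sq_le (τ : ℝ) (hτ : τ ∈ Set.Ioo (0 : ℝ) 1) (x : ℝ) :
    gExp τ x ^ 2 ≤ 4 * x ^ 2 := by
  obtain ⟨h0, h1⟩ := hτ
  unfold gExp
  split_ifs with h
  · have : (-2 * τ * x) ^ 2 = 4 * τ ^ 2 * x ^ 2 := by ring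
    rw [this]
    nlinarith [mul_nonneg (mul_nonneg (sq_nonneg x) (by linarith : (0:ℝ) ≤ 1 - τ)) (by linarith : (0:ℝ) ≤ 1 + τ)]
  · have : (-2 * (1 - τ) * x) ^ 2 = 4 * (1 - τ) ^ 2 * x ^ 2 := by ring
    rw [this]
    nlinarith [mul_nonneg (mul_nonneg (sq_nonneg x) (by linarith : (0:ℝ) ≤ τ)) (by linarith : (0:ℝ) ≤ 2 - τ)]

/-- From continuity of the survival function `G₀`, the measure of `{s ≤ C}`
equals `ofReal (G₀ s)`. -/
lemma measure_le_eq_ofReal {Ω : Type*} [MeasurableSpace Ω] (μ : Measure Ω)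
    [IsProbabilityMeasure μ] (C : Ω → ℝ) (hCm : Measurable C)
    (G0 : ℝ → ℝ) (hG0 : ∀ t, G0 t = (μ {ω | t < C ω}).toReal)
    (hG0cont : Continuous G0) (s : ℝ) :
    μ {ω | s ≤ C ω} = ENNReal.ofReal (G0 s) := by
  set A : ℕ → Set Ω := fun n => {ω | s - 1 / (n + 1) < C ω} with hA
  have hAm : ∀ n, MeasurableSet (A n) := fun n =>
    measurableSet_lt measurable_const hCm
  have hanti : Antitone A := by
    intro n m hnm ω hω
    simp only [hA, Set.mem_setOf_eq] at hω ⊢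
    have h1 : (1 : ℝ) / (m + 1) ≤ 1 / (n + 1) := by
      apply one_div_le_one_div_of_le
      · positivity
      · have := (Nat.cast_le (α := ℝ)).mpr hnm; linarith
    linarith
  have hInter : (⋂ n, A n) = {ω | s ≤ C ω} := by
    ext ω
    simp only [Set.mem_iInter, hA, Set.mem_setOf_eq]
    constructor
    · intro h
      by_contra hlt
      push_neg at hlt
      obtain ⟨n, hn⟩ := exists_nat_one_div_lt (by linarith : (0:ℝ) < s - C ω)
      have := h n
      linarith
    · intro h n
      have : (0:ℝ) < 1 / (n + 1) := by positivity
      linarith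
  have htend : Tendsto (μ ∘ A) atTop (𝓝 (μ (⋂ n, A n))) :=
    tendsto_measure_iInter_atTop (fun n => (hAm n).nullMeasurableSet) hanti
      ⟨0, measure_ne_top μ _⟩
  have hval : ∀ n, μ (A n) = ENNReal.ofReal (G0 (s - 1 / (n + 1))) := by
    intro n
    rw [hG0]
    exact (ENNReal.ofReal_toReal (measure_ne_top μ _)).symm
  have harg : Tendsto (fun n : ℕ => s - 1 / ((n : ℝ) + 1)) atTop (𝓝 s) := by
    have := tendsto_one_div_add_atTop_nhds_zero_nat (𝕜 := ℝ)
    have := (tendsto_const_nhds (x := s) (f := atTop (α := ℕ))).sub this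
    simpa using this
  have htend2 : Tendsto (μ ∘ A) atTop (𝓝 (ENNReal.ofReal (G0 s))) := by
    have hG : Tendsto (fun n : ℕ => G0 (s - 1 / ((n : ℝ) + 1))) atTop (𝓝 (G0 s)) :=
      (hG0cont.continuousAt.tendsto).comp harg
    have h2 := (ENNReal.continuous_ofReal.continuousAt.tendsto).comp hG
    exact h2.congr fun n => (hval n).symm
  rw [← hInter]
  exact tendsto_nhds_unique htend htend2

/-- under the AFT setup (`X` a.s. bounded, `ε ⟂ X` with
`E[ε²] < ∞`, `C ⟂ (ε,X)`, `T = exp(X^⊤β⁰ + ε)`, `δ = 1_{T≤C}`, `Y = min(T,C)`,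
`G₀(t) = P(C > t)` continuous with `G₀(T) ≥ ζ₀ > 0` a.s.), the second moment of
the weighted score satisfies, entrywise:
`E[(δ / G₀(Y)²) g_τ(ε)² X X^⊤] = E[g_τ(ε)² X X^⊤ / G₀(T)]`. -/
theorem censored_expectile_score_second_moment
    {Ω : Type*} [MeasurableSpace Ω] (μ : Measure Ω) [IsProbabilityMeasure μ]
    {p : ℕ} (τ : ℝ) (hτ : τ ∈ Set.Ioo (0 : ℝ) 1)
    (X : Ω → Fin p → ℝ) (ε : Ω → ℝ) (C : Ω → ℝ)
    (hXm : Measurable X) (hεm : Measurable ε) (hCm : Measurable C)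
    (hXbd : ∃ c : ℝ, ∀ᵐ ω ∂μ, ∀ j, |X ω j| ≤ c)
    (hIndεX : IndepFun ε X μ)
    (hε2 : Integrable (fun ω => ε ω ^ 2) μ)
    (hIndC : IndepFun C (fun ω => (ε ω, X ω)) μ)
    (β0 : Fin p → ℝ)
    (T : Ω → ℝ) (hT : ∀ ω, T ω = Real.exp ((∑ j, X ω j * β0 j) + ε ω))
    (δ : Ω → ℝ) (hδ : ∀ ω, δ ω = if T ω ≤ C ω then 1 else 0)
    (Y : Ω → ℝ) (hY : ∀ ω, Y ω = min (T ω) (C ω))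
    (G0 : ℝ → ℝ) (hG0 : ∀ t, G0 t = (μ {ω | t < C ω}).toReal)
    (hG0cont : Continuous G0)
    (ζ0 : ℝ) (hζ0 : 0 < ζ0) (hG0T : ∀ᵐ ω ∂μ, ζ0 ≤ G0 (T ω)) :
    ∀ j k,
      (∫ ω, (δ ω / (G0 (Y ω)) ^ 2) * gExp τ (ε ω) ^ 2 * X ω j * X ω k ∂μ)
        = ∫ ω, gExp τ (ε ω) ^ 2 * X ω j * X ω k / G0 (T ω) ∂μ := by
  intro j k
  obtain ⟨c, hc⟩ := hXbd
  -- abbreviations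
  set W : Ω → ℝ × (Fin p → ℝ) := fun ω => (ε ω, X ω) with hW
  have hWm : Measurable W := hεm.prodMk hXm
  set t : ℝ × (Fin p → ℝ) → ℝ := fun w => Real.exp ((∑ i, w.2 i * β0 i) + w.1) with ht
  have htc : Continuous t := by
    apply Real.continuous_exp.comp
    apply Continuous.add
    · exact continuous_finset_sum _ fun i _ =>
        ((continuous_apply i).comp continuous_snd).mul continuous_const
    · exact continuous_fst
  have htW : ∀ ω, t (W ω) = T ω := fun ω => (hT ω).symm
  set h : ℝ × (Fin p → ℝ) → ℝ :=
    fun w => gExp τ w.1 ^ 2 * w.2 j * w.2 k / G0 (t w) ^ 2 with hh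
  have hhm : Measurable h := by
    apply Measurable.div
    · exact (((gExp_measurable τ).comp measurable_fst).pow_const 2).mul
        ((measurable_pi_apply j).comp measurable_snd) |>.mul
        ((measurable_pi_apply k).comp measurable_snd)
    · exact ((hG0cont.measurable.comp htc.measurable).pow_const 2)
  set F : (ℝ × (Fin p → ℝ)) × ℝ → ℝ :=
    fun q => (if t q.1 ≤ q.2 then (1:ℝ) else 0) * h q.1 with hF
  have hFm : Measurable F := by
    apply Measurable.mul
    · exact Measurable.ite
        (measurableSet_le (htc.measurable.comp measurable_fst) measurable_snd)
        measurable_const measurable_const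
    · exact hhm.comp measurable_fst
  -- Step 1: rewrite LHS integrand as F (W ω, C ω)
  have hpt : ∀ ω, (δ ω / (G0 (Y ω)) ^ 2) * gExp τ (ε ω) ^ 2 * X ω j * X ω k
      = F (W ω, C ω) := by
    intro ω
    by_cases hTC : T ω ≤ C ω
    · simp only [hF, hδ, hY, hh, htW, if_pos hTC, min_eq_left hTC, hW]
      have e : t (ε ω, X ω) = T ω := htW ω
      rw [e, if_pos hTC]
      ring
    · simp only [hF, hδ, hY, hh, htW, if_neg hTC]
      ring
  -- probability measures on the image spaces
  haveI : IsProbabilityMeasure (μ.map W) := Measure.isProbabilityMeasure_map hWm.aemeasurable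
  haveI : IsProbabilityMeasure (μ.map C) := Measure.isProbabilityMeasure_map hCm.aemeasurable
  -- integrability of h under μ.map W
  have hhW : (fun ω => h (W ω)) = fun ω => gExp τ (ε ω) ^ 2 * X ω j * X ω k / G0 (T ω) ^ 2 := by
    funext ω; simp only [hh, hW]; rw [htW]
  have hint_hW : Integrable (fun ω => h (W ω)) μ := by
    rw [hhW]
    apply Integrable.mono ((hε2.const_mul (4 * c ^ 2 / ζ0 ^ 2)))
    · exact ((((gExp_measurable τ).comp hεm).pow_const 2).mul
        ((measurable_pi_apply j).comp hXm) |>.mul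
        ((measurable_pi_apply k).comp hXm)).div
        ((hG0cont.measurable.comp (by
          have : Measurable T := by
            have : T = fun ω => Real.exp ((∑ i, X ω i * β0 i) + ε ω) := funext hT
            rw [this]
            exact Real.measurable_exp.comp
              ((Finset.measurable_sum _ fun i _ =>
                ((measurable_pi_apply i).comp hXm).mul measurable_const).add hεm)
          exact this)).pow_const 2) |>.aestronglyMeasurable
    · filter_upwards [hc, hG0T] with ω hcω hζω
      have hG0pos : 0 < G0 (T ω) := lt_of_lt_of_le hζ0 hζω
      have hz : (ζ0:ℝ) ≠ 0 := ne_of_gt hζ0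
      have hgb : gExp τ (ε ω) ^ 2 ≤ 4 * ε ω ^ 2 := gExp_sq_le τ hτ (ε ω)
      have hgnn : 0 ≤ gExp τ (ε ω) ^ 2 := sq_nonneg _
      have hcnn : 0 ≤ c := le_trans (abs_nonneg _) (hcω j)
      have key : |gExp τ (ε ω) ^ 2 * X ω j * X ω k| ≤ 4 * ε ω ^ 2 * c ^ 2 := by
        rw [abs_mul, abs_mul, abs_of_nonneg hgnn]
        calc gExp τ (ε ω) ^ 2 * |X ω j| * |X ω k|
            ≤ (4 * ε ω ^ 2) * c * c := by
              apply mul_le_mul _ (hcω k) (abs_nonneg _) (by positivity)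
              exact mul_le_mul hgb (hcω j) (abs_nonneg _) (by positivity)
          _ = 4 * ε ω ^ 2 * c ^ 2 := by ring
      rw [Real.norm_eq_abs, Real.norm_eq_abs, abs_div,
        abs_of_nonneg (by positivity : (0:ℝ) ≤ G0 (T ω) ^ 2),
        abs_of_nonneg (by positivity : (0:ℝ) ≤ 4 * c ^ 2 / ζ0 ^ 2 * ε ω ^ 2),
        div_le_iff₀ (by positivity)]
      calc |gExp τ (ε ω) ^ 2 * X ω j * X ω k| ≤ 4 * ε ω ^ 2 * c ^ 2 := key
        _ = (4 * c ^ 2 / ζ0 ^ 2 * ε ω ^ 2) * ζ0 ^ 2 := by field_simp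
        _ ≤ (4 * c ^ 2 / ζ0 ^ 2 * ε ω ^ 2) * G0 (T ω) ^ 2 := by
            apply mul_le_mul_of_nonneg_left
              (pow_le_pow_left₀ (le_of_lt hζ0) hζω 2) (by positivity)
  have hint_h : Integrable h (μ.map W) :=
    (integrable_map_measure hhm.aestronglyMeasurable hWm.aemeasurable).mpr hint_hW
  -- integrability of F on the product measure
  have hint_hfst : Integrable (fun q : (ℝ × (Fin p → ℝ)) × ℝ => h q.1)
      ((μ.map W).prod (μ.map C)) := by
    have hmapfst : ((μ.map W).prod (μ.map C)).map Prod.fst = μ.map W := by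
      rw [← Measure.fst]; exact Measure.fst_prod
    have := (integrable_map_measure hhm.aestronglyMeasurable
      measurable_fst.aemeasurable (μ := (μ.map W).prod (μ.map C))).mp
    rw [hmapfst] at this
    exact this hint_h
  have hint_F : Integrable F ((μ.map W).prod (μ.map C)) := by
    apply Integrable.mono hint_hfst.abs hFm.aestronglyMeasurable
    filter_upwards with q
    simp only [hF, Real.norm_eq_abs, abs_abs, abs_mul]
    split_ifs <;> simp [abs_nonneg]
  -- Step 2: independence gives the product structure
  have hprod : μ.map (fun ω => (W ω, C ω)) = (μ.map W).prod (μ.map C) :=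
    (indepFun_iff_map_prod_eq_prod_map_map hWm.aemeasurable hCm.aemeasurable).mp
      hIndC.symm
  have step2 : (∫ ω, F (W ω, C ω) ∂μ) = ∫ q, F q ∂((μ.map W).prod (μ.map C)) := by
    rw [← hprod]
    exact (integral_map (hWm.prodMk hCm).aemeasurable
      hFm.aestronglyMeasurable).symm
  -- Step 3+4: Fubini and computation of the inner integral
  have step3 : (∫ q, F q ∂((μ.map W).prod (μ.map C)))
      = ∫ w, G0 (t w) * h w ∂(μ.map W) := by
    rw [integral_prod F hint_F]
    apply integral_congr_ae
    filter_upwards with w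
    have : ∫ y, F (w, y) ∂(μ.map C)
        = (∫ y, (if t w ≤ y then (1:ℝ) else 0) ∂(μ.map C)) * h w := by
      simp only [hF]
      exact integral_mul_const _ _
    rw [this]
    have hind : (fun y : ℝ => if t w ≤ y then (1:ℝ) else 0)
        = (Set.Ici (t w)).indicator (fun _ => (1:ℝ)) := by
      funext y
      simp [Set.indicator_apply, Set.mem_Ici]
    rw [hind, integral_indicator_const (1:ℝ) measurableSet_Ici]
    rw [measureReal_def, Measure.map_apply hCm measurableSet_Ici]
    have : C ⁻¹' Set.Ici (t w) = {ω | t w ≤ C ω} := rfl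
    rw [this, measure_le_eq_ofReal μ C hCm G0 hG0 hG0cont (t w),
      ENNReal.toReal_ofReal (by rw [hG0]; exact ENNReal.toReal_nonneg)]
    simp [smul_eq_mul]
  -- Step 5: pull back to Ω and simplify using G₀(T) > 0 a.e.
  have step5 : (∫ w, G0 (t w) * h w ∂(μ.map W))
      = ∫ ω, gExp τ (ε ω) ^ 2 * X ω j * X ω k / G0 (T ω) ∂μ := by
    have hm5 : AEStronglyMeasurable (fun w => G0 (t w) * h w) (μ.map W) :=
      ((hG0cont.measurable.comp htc.measurable).mul hhm).aestronglyMeasurable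
    rw [integral_map hWm.aemeasurable hm5]
    apply integral_congr_ae
    filter_upwards [hG0T] with ω hζω
    have hG0pos : 0 < G0 (T ω) := lt_of_lt_of_le hζ0 hζω
    have hne : G0 (T ω) ≠ 0 := ne_of_gt hG0pos
    show G0 (t (W ω)) * (gExp τ (ε ω) ^ 2 * X ω j * X ω k / G0 (t (W ω)) ^ 2)
        = gExp τ (ε ω) ^ 2 * X ω j * X ω k / G0 (T ω)
    rw [htW ω]
    field_simp
  calc (∫ ω, (δ ω / (G0 (Y ω)) ^ 2) * gExp τ (ε ω) ^ 2 * X ω j * X ω k ∂μ)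
      = ∫ ω, F (W ω, C ω) ∂μ := by
        apply integral_congr_ae
        filter_upwards with ω
        exact hpt ω
    _ = ∫ q, F q ∂((μ.map W).prod (μ.map C)) := step2
    _ = ∫ w, G0 (t w) * h w ∂(μ.map W) := step3
    _ = ∫ ω, gExp τ (ε ω) ^ 2 * X ω j * X ω k / G0 (T ω) ∂μ := step5
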